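/- Fix 0 ≤ l_1, l_2 ≤ k and let (I, J) be an (l_1, l_2)-admissible pair with I = {u_1 < ⋯ < u_a} and J = {v_1 < ⋯ < v_b}. Then the vectors ρ(I,J) = Σ_{i=1}^a (κ(v_i) − κ(u_i)) + Σ_{i=a+1}^p (κ(v_i) − κ(v'_i)) and σ(J) = κ[1, l_2] − κ(J) have all components nonnegative. -/

import Mathlib

/-- `κ(I)_α = #{i ∈ I : i ≤ α}`. -/
def kappa (I : Finset ℕ) (α : ℕ) : ℤ := ((I.filter (fun i => i ≤ α)).card : ℤ)

/-- for an `(l₁,l₂)`-admissible pair `(I,J)` with `I = {u_1<⋯<u_a}`,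
`J = {v_1<⋯<v_b}`, `p = #{i : v_i ≤ l₁}`, and `v'_i` the decreasing labeling of
`[l₁+1,k] \ J` (with labels beyond the complement size set to `k+1`), the vectors
`ρ(I,J) = Σ_{i=1}^a (κ(v_i) − κ(u_i)) + Σ_{i=a+1}^p (κ(v_i) − κ(v'_i))` and
`σ(J) = κ[1,l₂] − κ(J)` have all components (for `1 ≤ α ≤ k`) nonnegative. -/
theorem stmt8 (k l1 l2 a b : ℕ) (hl1 : l1 ≤ k) (hl2 : l2 ≤ k)
    (u : Fin a → ℕ) (v : Fin b → ℕ) (hu : StrictMono u) (hv : StrictMono v)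
    (hur : ∀ i, u i ∈ Finset.Icc 1 k) (hvr : ∀ i, v i ∈ Finset.Icc 1 k)
    (p : ℕ) (hp : p = (Finset.univ.filter (fun i : Fin b => v i ≤ l1)).card)
    (hap : a ≤ p) (hpb : p ≤ b) (hbl2 : b ≤ l2)
    (hadm : ∀ i : Fin a, v (Fin.castLE (hap.trans hpb) i) ≤ u i ∧
      u i < ((Finset.Icc (l1 + 1) k \ Finset.image v Finset.univ).sort (· ≤ ·)).getD
        (p - ((i : ℕ) + 1)) (k + 1)) :
    ∀ α ∈ Finset.Icc 1 k,
      (0 ≤ (∑ i : Fin a,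
            ((if v (Fin.castLE (hap.trans hpb) i) ≤ α then (1 : ℤ) else 0) -
              (if u i ≤ α then (1 : ℤ) else 0)))
          + (∑ i : Fin p, if a ≤ (i : ℕ) then
              ((if v (Fin.castLE hpb i) ≤ α then (1 : ℤ) else 0) -
                (if ((Finset.Icc (l1 + 1) k \ Finset.image v Finset.univ).sort (· ≤ ·)).getD
                      (p - ((i : ℕ) + 1)) (k + 1) ≤ α then (1 : ℤ) else 0))
              else 0))
        ∧ 0 ≤ kappa (Finset.Icc 1 l2) α - kappa (Finset.image v Finset.univ) α := by
  -- elements of the sorted complement list (and the default) are ≥ l1 + 1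
  have hgetD : ∀ n : ℕ, l1 + 1 ≤
      ((Finset.Icc (l1 + 1) k \ Finset.image v Finset.univ).sort (· ≤ ·)).getD n (k + 1) := by
    intro n
    set L := (Finset.Icc (l1 + 1) k \ Finset.image v Finset.univ).sort (· ≤ ·) with hL
    rcases lt_or_ge n L.length with h | h
    · have hEq : L.getD n (k + 1) = L[n]'h := by
        simp [List.getD_eq_getElem?_getD, List.getElem?_eq_getElem h]
      have hmem : L[n]'h ∈ L := List.getElem_mem h
      have hmem2 : L[n]'h ∈ Finset.Icc (l1 + 1) k \ Finset.image v Finset.univ :=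
        (Finset.mem_sort _).mp hmem
      have := (Finset.mem_Icc.mp (Finset.mem_sdiff.mp hmem2).1).1
      omega
    · rw [List.getD_eq_default L _ h]; omega
  -- the first p values of v are ≤ l1
  have hvle : ∀ i : Fin p, v (Fin.castLE hpb i) ≤ l1 := by
    intro i
    by_contra h
    push_neg at h
    have himg : ((Finset.univ.filter (fun j : Fin b => v j ≤ l1)).image
        Fin.val).card ≤ (Finset.range i.val).card := by
      apply Finset.card_le_card
      intro x hx
      simp only [Finset.mem_image, Finset.mem_filter, Finset.mem_univ, true_and] at hx
      obtain ⟨j, hj, rfl⟩ := hx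
      have hlt : v j < v (Fin.castLE hpb i) := lt_of_le_of_lt hj h
      have := hv.lt_iff_lt.mp hlt
      exact Finset.mem_range.mpr this
    rw [Finset.card_image_of_injective _ Fin.val_injective, Finset.card_range] at himg
    have hsub := himg
    have := i.isLt
    omega
  intro α hα
  simp only [Finset.mem_Icc] at hα
  constructor
  · apply add_nonneg
    · apply Finset.sum_nonneg
      intro i _
      have h1 := (hadm i).1
      rcases le_or_gt (u i) α with h | h
      · simp [h, le_trans h1 h]
      · rw [if_neg (show ¬ u i ≤ α by omega)]
        split <;> norm_num
    · apply Finset.sum_nonneg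
      intro i _
      split
      · have h1 := hvle i
        have h2 := hgetD (p - ((i : ℕ) + 1))
        rcases le_or_gt (((Finset.Icc (l1 + 1) k \ Finset.image v Finset.univ).sort
            (· ≤ ·)).getD (p - ((i : ℕ) + 1)) (k + 1)) α with h | h
        · rw [if_pos (show v (Fin.castLE hpb i) ≤ α by omega), if_pos h]
          norm_num
        · rw [if_neg (show ¬ ((Finset.Icc (l1 + 1) k \ Finset.image v Finset.univ).sort
              (· ≤ ·)).getD (p - ((i : ℕ) + 1)) (k + 1) ≤ α by omega)]
          split <;> norm_num
      · exact le_refl 0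
  · unfold kappa
    have hk1 : ((Finset.Icc 1 l2).filter (fun i => i ≤ α)).card = min l2 α := by
      have he : (Finset.Icc 1 l2).filter (fun i => i ≤ α) = Finset.Icc 1 (min l2 α) := by
        ext x
        simp only [Finset.mem_filter, Finset.mem_Icc]
        omega
      rw [he, Nat.card_Icc]
      omega
    have hc1 : ((Finset.image v Finset.univ).filter (fun i => i ≤ α)).card ≤ l2 := by
      calc ((Finset.image v Finset.univ).filter (fun i => i ≤ α)).card
          ≤ (Finset.image v Finset.univ).card := Finset.card_le_card (Finset.filter_subset _ _)
        _ ≤ (Finset.univ : Finset (Fin b)).card := Finset.card_image_le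
        _ = b := by simp
        _ ≤ l2 := hbl2
    have hc2 : ((Finset.image v Finset.univ).filter (fun i => i ≤ α)).card ≤ α := by
      have hsub : (Finset.image v Finset.univ).filter (fun i => i ≤ α) ⊆ Finset.Icc 1 α := by
        intro x hx
        simp only [Finset.mem_filter, Finset.mem_image] at hx
        obtain ⟨⟨j, _, hj⟩, hxα⟩ := hx
        have := (Finset.mem_Icc.mp (hvr j)).1
        simp only [Finset.mem_Icc]
        omega
      calc ((Finset.image v Finset.univ).filter (fun i => i ≤ α)).card
          ≤ (Finset.Icc 1 α).card := Finset.card_le_card hsub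
        _ = α := by rw [Nat.card_Icc]; omega
    rw [hk1]
    omega
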